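/- Let Q be a probability measure on a measurable space 𝒳, let λ > 0, and let L : 𝒳 → ℝ be bounded and measurable. Then the supremum over all probability measures P on 𝒳 of ∫ L dP − λ·KL(P‖Q) (interpreted as −∞ when KL(P‖Q) = +∞) equals λ · log ∫ exp(L/λ) dQ. -/

import Mathlib

open MeasureTheory Classical

noncomputable def KL {𝒳 : Type*} [MeasurableSpace 𝒳] (P Q : Measure 𝒳) : EReal :=
  if P ≪ Q ∧ Integrable (fun x => Real.log (P.rnDeriv Q x).toReal) P
  then ((∫ x, Real.log (P.rnDeriv Q x).toReal ∂P : ℝ) : EReal)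
  else ⊤

theorem multiplier_dual_representation
    {𝒳 : Type*} [MeasurableSpace 𝒳] (Q : Measure 𝒳) [IsProbabilityMeasure Q]
    (lam : ℝ) (hlam : 0 < lam)
    (L : 𝒳 → ℝ) (hLmeas : Measurable L) (hLbdd : ∃ C : ℝ, ∀ x, |L x| ≤ C) :
    (⨆ (P : Measure 𝒳) (_ : IsProbabilityMeasure P),
        ((∫ x, L x ∂P : ℝ) : EReal) - (lam : EReal) * KL P Q)
      = ((lam * Real.log (∫ x, Real.exp (L x / lam) ∂Q) : ℝ) : EReal) := by
  obtain ⟨C, hC⟩ := hLbdd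
  set Z : ℝ := ∫ x, Real.exp (L x / lam) ∂Q with hZdef
  have hexp_meas : Measurable fun x => Real.exp (L x / lam) := (hLmeas.div_const lam).exp
  have hexp_int : Integrable (fun x => Real.exp (L x / lam)) Q := by
    refine Integrable.mono' (integrable_const (Real.exp (C / lam)))
      hexp_meas.aestronglyMeasurable ?_
    filter_upwards with x
    rw [Real.norm_eq_abs, abs_of_pos (Real.exp_pos _)]
    exact Real.exp_le_exp.mpr (by gcongr; exact (abs_le.mp (hC x)).2)
  have hZpos : 0 < Z := by
    have h1 : Real.exp (-C / lam) ≤ Z := by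
      calc Real.exp (-C / lam) = ∫ _, Real.exp (-C / lam) ∂Q := by simp
        _ ≤ Z := by
          refine integral_mono (integrable_const _) hexp_int fun x => ?_
          exact Real.exp_le_exp.mpr (by gcongr; exact (abs_le.mp (hC x)).1)
    exact lt_of_lt_of_le (Real.exp_pos _) h1
  -- upper bound for every probability measure P
  have key : ∀ (P : Measure 𝒳), IsProbabilityMeasure P →
      ((∫ x, L x ∂P : ℝ) : EReal) - (lam : EReal) * KL P Q
        ≤ ((lam * Real.log Z : ℝ) : EReal) := by
    intro P hP
    haveI := hP
    by_cases hcond : P ≪ Q ∧ Integrable (fun x => Real.log (P.rnDeriv Q x).toReal) P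
    · obtain ⟨hPQ, hint⟩ := hcond
      rw [KL, if_pos ⟨hPQ, hint⟩, ← EReal.coe_mul, ← EReal.coe_sub, EReal.coe_le_coe_iff]
      set f : 𝒳 → ℝ := fun x => (P.rnDeriv Q x).toReal with hf
      set g : 𝒳 → ℝ := fun x => Real.exp (L x / lam) / f x with hg
      have hfmeas : Measurable f := (Measure.measurable_rnDeriv P Q).ennreal_toReal
      have hgmeas : Measurable g := hexp_meas.div hfmeas
      have hfg_le : ∀ x, f x * g x ≤ Real.exp (L x / lam) := by
        intro x
        rcases eq_or_ne (f x) 0 with h | h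
        · simp [hg, h, (Real.exp_pos _).le]
        · rw [hg, mul_div_cancel₀ _ h]
      have hfg_nonneg : ∀ x, 0 ≤ f x * g x := fun x =>
        mul_nonneg ENNReal.toReal_nonneg (div_nonneg (Real.exp_pos _).le ENNReal.toReal_nonneg)
      have hfg_int : Integrable (fun x => f x * g x) Q := by
        refine Integrable.mono' hexp_int (hfmeas.mul hgmeas).aestronglyMeasurable ?_
        filter_upwards with x
        rw [Real.norm_eq_abs, abs_of_nonneg (hfg_nonneg x)]
        exact hfg_le x
      have hg_int : Integrable g P := by
        rw [← integrable_rnDeriv_smul_iff hPQ]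
        simpa [smul_eq_mul] using hfg_int
      have hgZ : ∫ x, g x ∂P ≤ Z := by
        rw [← integral_rnDeriv_smul hPQ (f := g)]
        simp only [smul_eq_mul]
        exact integral_mono hfg_int hexp_int hfg_le
      have hL_int : Integrable L P := by
        refine Integrable.mono' (integrable_const C) hLmeas.aestronglyMeasurable ?_
        filter_upwards with x using (hC x)
      have hae : ∀ᵐ x ∂P, L x - lam * Real.log (f x)
          ≤ lam * Real.log Z + lam / Z * g x - lam := by
        filter_upwards [Measure.rnDeriv_pos hPQ, hPQ.ae_le (Measure.rnDeriv_lt_top P Q)]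
          with x hpos hlt
        have hfx : 0 < f x := ENNReal.toReal_pos hpos.ne' hlt.ne
        have hy : (0:ℝ) < Real.exp (L x / lam) / (f x * Z) :=
          div_pos (Real.exp_pos _) (mul_pos hfx hZpos)
        have h1 := Real.log_le_sub_one_of_pos hy
        rw [Real.log_div (Real.exp_pos _).ne' (mul_pos hfx hZpos).ne', Real.log_exp,
          Real.log_mul hfx.ne' hZpos.ne'] at h1
        have hgx : Real.exp (L x / lam) / (f x * Z) = g x / Z := by
          rw [hg]; field_simp
        rw [hgx] at h1
        have h2 := mul_le_mul_of_nonneg_left h1 hlam.le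
        have hLl : lam * (L x / lam) = L x := mul_div_cancel₀ _ hlam.ne'
        have hgZl : lam * (g x / Z) = lam / Z * g x := by ring
        rw [mul_sub, mul_sub, mul_add, hLl, mul_one, hgZl] at h2
        linarith
      have hlhs_int : Integrable (fun x => L x - lam * Real.log (f x)) P :=
        hL_int.sub (hint.const_mul lam)
      have hrhs_int : Integrable (fun x => lam * Real.log Z + lam / Z * g x - lam) P :=
        ((integrable_const _).add (hg_int.const_mul _)).sub (integrable_const _)
      have hstep : ∫ x, (L x - lam * Real.log (f x)) ∂P
          ≤ ∫ x, (lam * Real.log Z + lam / Z * g x - lam) ∂P :=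
        integral_mono_ae hlhs_int hrhs_int hae
      have hrhs : ∫ x, (lam * Real.log Z + lam / Z * g x - lam) ∂P
          = (lam * Real.log Z - lam) + lam / Z * ∫ x, g x ∂P := by
        have heq : (fun x => lam * Real.log Z + lam / Z * g x - lam)
            = fun x => (lam * Real.log Z - lam) + (lam / Z) * g x := by funext x; ring
        rw [heq, integral_add (integrable_const _) (hg_int.const_mul _), integral_const_mul,
          integral_const]
        simp
      rw [hrhs, integral_sub hL_int (hint.const_mul lam), integral_const_mul] at hstep
      have hfin : lam / Z * ∫ x, g x ∂P ≤ lam :=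
        calc lam / Z * ∫ x, g x ∂P ≤ lam / Z * Z :=
              mul_le_mul_of_nonneg_left hgZ (div_nonneg hlam.le hZpos.le)
          _ = lam := div_mul_cancel₀ _ hZpos.ne'
      linarith
    · rw [KL, if_neg hcond, EReal.mul_top_of_pos (by exact_mod_cast hlam)]
      rw [sub_eq_add_neg]
      simp only [EReal.neg_top, EReal.add_bot]
      exact bot_le
  -- the maximizing Gibbs measure
  set g0 : 𝒳 → ℝ := fun x => Real.exp (L x / lam) / Z with hg0
  have hg0meas : Measurable g0 := hexp_meas.div_const Z
  have hg0nonneg : ∀ x, 0 ≤ g0 x := fun x => div_nonneg (Real.exp_pos _).le hZpos.le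
  have hg0int : Integrable g0 Q := hexp_int.div_const Z
  set P' : Measure 𝒳 := Q.withDensity (fun x => ENNReal.ofReal (g0 x)) with hP'
  have hP'Q : P' ≪ Q := withDensity_absolutelyContinuous _ _
  have hP'prob : IsProbabilityMeasure P' := by
    constructor
    rw [hP', withDensity_apply _ MeasurableSet.univ, setLIntegral_univ,
      ← ofReal_integral_eq_lintegral_ofReal hg0int (Filter.Eventually.of_forall hg0nonneg)]
    rw [hg0]
    simp only [integral_div]
    rw [← hZdef, div_self hZpos.ne', ENNReal.ofReal_one]
  haveI := hP'prob
  have hrn : P'.rnDeriv Q =ᵐ[Q] fun x => ENNReal.ofReal (g0 x) :=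
    Measure.rnDeriv_withDensity Q hg0meas.ennreal_ofReal
  have hlogrn : (fun x => Real.log (P'.rnDeriv Q x).toReal)
      =ᵐ[P'] fun x => L x / lam - Real.log Z := by
    filter_upwards [hP'Q.ae_le hrn] with x hx
    rw [hx, ENNReal.toReal_ofReal (hg0nonneg x), hg0,
      Real.log_div (Real.exp_pos _).ne' hZpos.ne', Real.log_exp]
  have hLP'_int : Integrable L P' := by
    refine Integrable.mono' (integrable_const C) hLmeas.aestronglyMeasurable ?_
    filter_upwards with x using (hC x)
  have haux_int : Integrable (fun x => L x / lam - Real.log Z) P' :=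
    (hLP'_int.div_const lam).sub (integrable_const _)
  have hint' : Integrable (fun x => Real.log (P'.rnDeriv Q x).toReal) P' :=
    haux_int.congr hlogrn.symm
  have hval : ((∫ x, L x ∂P' : ℝ) : EReal) - (lam : EReal) * KL P' Q
      = ((lam * Real.log Z : ℝ) : EReal) := by
    rw [KL, if_pos ⟨hP'Q, hint'⟩, integral_congr_ae hlogrn, ← EReal.coe_mul, ← EReal.coe_sub,
      EReal.coe_eq_coe_iff]
    rw [integral_sub (hLP'_int.div_const lam) (integrable_const _), integral_div, integral_const]
    simp only [measure_univ, probReal_univ, ENNReal.toReal_one, smul_eq_mul, one_mul]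
    field_simp
    ring
  refine le_antisymm (iSup_le fun P => iSup_le fun hP => key P hP) ?_
  exact le_iSup_of_le P' (le_iSup_of_le hP'prob (le_of_eq hval.symm))
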